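/- Fournier's fully-sorted Minkowski inequality: let (X₁,μ₁),…,(Xₙ,μₙ) be σ-finite measure spaces with product (X,μ), let p₁,…,pₙ ∈ (0,∞], and let P be the double n-tuple pairing pⱼ with xⱼ. Let σ and ρ be permutations of {1,…,n} with p_{σ(1)} ≥ p_{σ(2)} ≥ ⋯ ≥ p_{σ(n)} and p_{ρ(1)} ≤ p_{ρ(2)} ≤ ⋯ ≤ p_{ρ(n)}. Then for every nonnegative measurable function f on X, ‖f‖_{P·ρ} ≤ ‖f‖_P ≤ ‖f‖_{P·σ}. In words: among all orderings of the iterated norms, taking the exponents in decreasing order of integration (largest exponent innermost) gives the largest mixed norm, and taking them in increasing order gives the smallest. -/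

import Mathlib

open MeasureTheory
open scoped ENNReal

/-- Take the `L^q` norm of `f` in the single variable `x_j`, with the convention that
an exponent `∞` is interpreted as the essential supremum in that variable. -/
noncomputable def normIn {n : ℕ} {X : Fin n → Type*} [∀ j, MeasurableSpace (X j)]
    (μ : ∀ j, Measure (X j)) (j : Fin n) (q : ℝ≥0∞)
    (f : (∀ k, X k) → ℝ≥0∞) : (∀ k, X k) → ℝ≥0∞ :=
  fun x =>
    if q = ∞ then essSup (fun t => f (Function.update x j t)) (μ j)
    else (∫⁻ t, f (Function.update x j t) ^ q.toReal ∂(μ j)) ^ (1 / q.toReal)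

/-- The mixed norm of `f` determined by a double `n`-tuple, given as the list of
(variable, exponent) pairs in the order of processing. -/
noncomputable def mixedNorm {n : ℕ} {X : Fin n → Type*} [∀ j, MeasurableSpace (X j)]
    (μ : ∀ j, Measure (X j)) (P : List (Fin n × ℝ≥0∞))
    (f : (∀ k, X k) → ℝ≥0∞) : ℝ≥0∞ :=
  ⨆ x, (P.foldl (fun g jq => normIn μ jq.1 jq.2 g) f) x

set_option linter.unusedSectionVars false

section core
variable {α β : Type*} [MeasurableSpace α] [MeasurableSpace β]
  {μ : Measure α} {ν : Measure β}

/-- one-variable `L^q` quasinorm with `∞` as essential supremum -/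
noncomputable def lnorm (ν : Measure β) (q : ℝ≥0∞) (g : β → ℝ≥0∞) : ℝ≥0∞ :=
  if q = ∞ then essSup g ν
  else (∫⁻ t, g t ^ q.toReal ∂ν) ^ (1 / q.toReal)

theorem lnorm_mono {q : ℝ≥0∞} {g g' : β → ℝ≥0∞} (h : ∀ b, g b ≤ g' b) :
    lnorm ν q g ≤ lnorm ν q g' := by
  unfold lnorm
  split
  · exact essSup_mono_ae (Filter.Eventually.of_forall h)
  · exact ENNReal.rpow_le_rpow
      (lintegral_mono fun b => ENNReal.rpow_le_rpow (h b) ENNReal.toReal_nonneg)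
      (by positivity)

/-- essSup as a countable infimum over rationals -/
theorem essSup_eq_iInf_rat (g : β → ℝ≥0∞) :
    essSup g ν = ⨅ q : ℚ,
      if ν {b | ENNReal.ofReal q < g b} = 0 then ENNReal.ofReal q else ∞ := by
  rw [essSup_eq_sInf]
  set S : Set ℝ≥0∞ := {a | ν {x | a < g x} = 0} with hS
  have hup : ∀ {a b : ℝ≥0∞}, a ∈ S → a ≤ b → b ∈ S := by
    intro a b ha hab
    exact measure_mono_null (fun x hx => lt_of_le_of_lt hab hx) ha
  apply le_antisymm
  · refine le_iInf fun q => ?_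
    split_ifs with h
    · exact sInf_le h
    · exact le_top
  · by_contra hlt
    push_neg at hlt
    obtain ⟨d, hd1, hd2⟩ := exists_between hlt
    obtain ⟨c, hcS, hcd⟩ := sInf_lt_iff.mp hd1
    have hc_top : c ≠ ∞ := (hcd.trans_le le_top).ne
    rcases eq_or_ne d ∞ with hd | hd
    · obtain ⟨m, hm⟩ := ENNReal.exists_nat_gt hc_top
      have hqS : ENNReal.ofReal ((m : ℚ) : ℝ) ∈ S := by
        refine hup hcS (le_trans hm.le ?_)
        simp [ENNReal.ofReal_natCast]
      have heq : (if ν {b | ENNReal.ofReal ((m:ℚ):ℝ) < g b} = 0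
          then ENNReal.ofReal ((m:ℚ):ℝ) else ∞) = ENNReal.ofReal ((m:ℚ):ℝ) := if_pos hqS
      have h1 := (iInf_le (fun q : ℚ => if ν {b | ENNReal.ofReal q < g b} = 0
        then ENNReal.ofReal q else ∞) (m : ℚ)).trans heq.le
      exact absurd ((h1.trans_lt (hd ▸ ENNReal.ofReal_lt_top)).trans hd2) (lt_irrefl _)
    · have hcr : c.toReal < d.toReal := ENNReal.toReal_strict_mono hd hcd
      obtain ⟨q, hq1, hq2⟩ := exists_rat_btwn hcr
      have hcq : c ≤ ENNReal.ofReal q := by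
        rw [← ENNReal.ofReal_toReal hc_top]
        exact ENNReal.ofReal_le_ofReal hq1.le
      have hqS : ENNReal.ofReal (q : ℝ) ∈ S := hup hcS hcq
      have hqd : ENNReal.ofReal (q : ℝ) < d :=
        (ENNReal.ofReal_lt_iff_lt_toReal (le_trans ENNReal.toReal_nonneg hq1.le) hd).mpr hq2
      have heq : (if ν {b | ENNReal.ofReal (q:ℝ) < g b} = 0
          then ENNReal.ofReal (q:ℝ) else ∞) = ENNReal.ofReal (q:ℝ) := if_pos hqS
      have h1 := (iInf_le (fun q : ℚ => if ν {b | ENNReal.ofReal q < g b} = 0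
        then ENNReal.ofReal q else ∞) q).trans heq.le
      exact absurd ((h1.trans_lt hqd).trans hd2) (lt_irrefl _)

theorem measurable_essSup_param {γ : Type*} [MeasurableSpace γ] [SFinite ν]
    {g : γ → β → ℝ≥0∞} (hg : Measurable (Function.uncurry g)) :
    Measurable fun c => essSup (g c) ν := by
  simp_rw [essSup_eq_iInf_rat (ν := ν)]
  refine Measurable.iInf fun q => ?_
  have hs : MeasurableSet {p : γ × β | ENNReal.ofReal q < Function.uncurry g p} :=
    measurableSet_lt measurable_const hg
  have hm : Measurable fun c => ν (Prod.mk c ⁻¹' {p : γ × β | ENNReal.ofReal q < Function.uncurry g p}) :=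
    measurable_measure_prodMk_left hs
  have : Measurable fun c => ν {b | ENNReal.ofReal q < g c b} := hm
  exact Measurable.ite (this (measurableSet_singleton 0)) measurable_const measurable_const

theorem measurable_lnorm_param {γ : Type*} [MeasurableSpace γ] [SFinite ν]
    {g : γ → β → ℝ≥0∞} (hg : Measurable (Function.uncurry g)) (q : ℝ≥0∞) :
    Measurable fun c => lnorm ν q (g c) := by
  unfold lnorm
  split
  · exact measurable_essSup_param hg
  · refine Measurable.pow ?_ measurable_const
    refine Measurable.lintegral_prod_right' (f := fun p : γ × β => g p.1 p.2 ^ q.toReal) ?_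
    exact hg.pow measurable_const

end core

section mink
variable {α β : Type*} [MeasurableSpace α] [MeasurableSpace β]
  {μ : Measure α} {ν : Measure β}

theorem ennreal_iSup_rpow {ι : Type*} (f : ι → ℝ≥0∞) {r : ℝ} (hr : 0 < r) :
    (⨆ i, f i) ^ r = ⨆ i, f i ^ r := by
  apply le_antisymm
  · have h1 : ⨆ i, f i ≤ (⨆ i, f i ^ r) ^ (1/r) := by
      refine iSup_le fun i => ?_
      have : f i = (f i ^ r) ^ (1/r) := by
        rw [← ENNReal.rpow_mul, mul_one_div, div_self hr.ne', ENNReal.rpow_one]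
      rw [this]
      exact ENNReal.rpow_le_rpow (le_iSup (fun i => f i ^ r) i) (by positivity)
    calc (⨆ i, f i) ^ r ≤ ((⨆ i, f i ^ r) ^ (1/r)) ^ r :=
          ENNReal.rpow_le_rpow h1 hr.le
      _ = ⨆ i, f i ^ r := by
          rw [← ENNReal.rpow_mul, one_div_mul_cancel hr.ne', ENNReal.rpow_one]
  · exact iSup_le fun i => ENNReal.rpow_le_rpow (le_iSup f i) hr.le

theorem minkowski_aux [SFinite μ] [SFinite ν] {r : ℝ} (hr : 1 < r)
    {G : α → β → ℝ≥0∞} (hG : Measurable (Function.uncurry G))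
    (hK : (∫⁻ b, (∫⁻ a, G a b ∂μ) ^ r ∂ν) ≠ ∞) :
    (∫⁻ b, (∫⁻ a, G a b ∂μ) ^ r ∂ν) ^ (1/r) ≤ ∫⁻ a, (∫⁻ b, G a b ^ r ∂ν) ^ (1/r) ∂μ := by
  have hr0 : (0:ℝ) < r := by linarith
  have hconj : r.HolderConjugate (r / (r-1)) := Real.HolderConjugate.conjExponent hr
  set r' : ℝ := r / (r - 1) with hr'
  set K : ℝ≥0∞ := ∫⁻ b, (∫⁻ a, G a b ∂μ) ^ r ∂ν with hKdef
  set R : ℝ≥0∞ := ∫⁻ a, (∫⁻ b, G a b ^ r ∂ν) ^ (1/r) ∂μ with hRdef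
  set Φ : β → ℝ≥0∞ := fun b => (∫⁻ a, G a b ∂μ) ^ (r - 1) with hΦ
  have mI : Measurable fun b => ∫⁻ a, G a b ∂μ :=
    Measurable.lintegral_prod_left' (f := fun p : α × β => G p.1 p.2) hG
  have mΦ : Measurable Φ := mI.pow measurable_const
  have mGa : ∀ a, Measurable (G a) := fun a =>
    hG.comp (measurable_const.prodMk measurable_id)
  have mGb : ∀ b, Measurable fun a => G a b := fun b =>
    hG.comp (measurable_id.prodMk measurable_const)
  -- Φ ^ r' = the integrand of K
  have hΦr' : ∀ b, Φ b ^ r' = (∫⁻ a, G a b ∂μ) ^ r := by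
    intro b
    rw [hΦ, ← ENNReal.rpow_mul]
    congr 1
    have h1 : r - 1 ≠ 0 := by linarith
    rw [hr']
    field_simp
  have step2 : K = ∫⁻ a, ∫⁻ b, G a b * Φ b ∂ν ∂μ := by
    rw [lintegral_lintegral_swap ((hG.mul (mΦ.comp measurable_snd)).aemeasurable)]
    refine lintegral_congr fun b => ?_
    rw [lintegral_mul_const _ (mGb b)]
    have e1 : (1:ℝ) + (r - 1) = r := by ring
    conv_lhs => rw [← e1]
    rw [ENNReal.rpow_add_of_nonneg _ _ zero_le_one (by linarith), ENNReal.rpow_one]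
  have step3 : ∀ a, ∫⁻ b, G a b * Φ b ∂ν ≤ (∫⁻ b, G a b ^ r ∂ν) ^ (1/r) * K ^ (1/r') := by
    intro a
    have h := ENNReal.lintegral_mul_le_Lp_mul_Lq ν hconj (mGa a).aemeasurable mΦ.aemeasurable
    simp only [Pi.mul_apply] at h
    refine h.trans ?_
    rw [show (∫⁻ b, Φ b ^ r' ∂ν) = K from lintegral_congr hΦr']
  have step4 : K ≤ R * K ^ (1/r') := by
    calc K = ∫⁻ a, ∫⁻ b, G a b * Φ b ∂ν ∂μ := step2
      _ ≤ ∫⁻ a, (∫⁻ b, G a b ^ r ∂ν) ^ (1/r) * K ^ (1/r') ∂μ :=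
          lintegral_mono step3
      _ = R * K ^ (1/r') :=
          lintegral_mul_const _ ((Measurable.lintegral_prod_right'
            (f := fun p : α × β => G p.1 p.2 ^ r) (hG.pow measurable_const)).pow
            measurable_const)
  rcases eq_or_ne K 0 with hK0 | hK0
  · rw [hK0, ENNReal.zero_rpow_of_pos (by positivity)]
    exact zero_le
  · have hKr' : K ^ (1/r') ≠ 0 :=
      (ENNReal.rpow_pos (pos_iff_ne_zero.mpr hK0) hK).ne'
    have hKr'top : K ^ (1/r') ≠ ∞ :=
      ENNReal.rpow_ne_top_of_nonneg hconj.symm.one_div_nonneg hK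
    have hdiv : K / K ^ (1/r') ≤ R :=
      ENNReal.div_le_of_le_mul' (step4.trans_eq (mul_comm _ _))
    refine le_trans (le_of_eq ?_) hdiv
    have hsum : 1/r' + 1/r = 1 := by
      rw [one_div, one_div, add_comm]; exact hconj.inv_add_inv_eq_one
    rw [ENNReal.eq_div_iff hKr' hKr'top, ← ENNReal.rpow_add _ _ hK0 hK, hsum,
      ENNReal.rpow_one]

theorem minkowski [SigmaFinite μ] [SigmaFinite ν] {r : ℝ} (hr : 1 ≤ r)
    {G : α → β → ℝ≥0∞} (hG : Measurable (Function.uncurry G)) :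
    (∫⁻ b, (∫⁻ a, G a b ∂μ) ^ r ∂ν) ^ (1/r) ≤ ∫⁻ a, (∫⁻ b, G a b ^ r ∂ν) ^ (1/r) ∂μ := by
  rcases eq_or_lt_of_le hr with hr1 | hr1
  · subst hr1
    simp only [ENNReal.rpow_one, one_div_one]
    exact le_of_eq (lintegral_lintegral_swap hG.aemeasurable).symm
  -- r > 1 : truncation
  have hr0 : (0:ℝ) < r := by linarith
  set A := spanningSets μ with hA
  set B := spanningSets ν with hB
  set Gm : ℕ → α → β → ℝ≥0∞ := fun m a b =>
    min (G a b) (m : ℝ≥0∞) * (A m).indicator 1 a * (B m).indicator 1 b with hGm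
  have hGmMeas : ∀ m, Measurable (Function.uncurry (Gm m)) := fun m =>
    (((hG.min measurable_const).mul
      ((measurable_one.indicator (measurableSet_spanningSets μ m)).comp measurable_fst)).mul
      ((measurable_one.indicator (measurableSet_spanningSets ν m)).comp measurable_snd))
  have hle : ∀ m a b, Gm m a b ≤ G a b := by
    intro m a b
    calc Gm m a b ≤ min (G a b) (m : ℝ≥0∞) * 1 * 1 :=
          mul_le_mul' (mul_le_mul' le_rfl
            (Set.indicator_le_self' (fun _ _ => zero_le_one) a))
            (Set.indicator_le_self' (fun _ _ => zero_le_one) b)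
      _ ≤ G a b := by rw [mul_one, mul_one]; exact min_le_left _ _
  have hmono : ∀ a b, Monotone fun m => Gm m a b := by
    intro a b m k hmk
    refine mul_le_mul' (mul_le_mul' (min_le_min le_rfl (Nat.cast_le.mpr hmk)) ?_) ?_
    · exact Set.indicator_le_indicator_of_subset (monotone_spanningSets μ hmk)
        (fun _ => zero_le) a
    · exact Set.indicator_le_indicator_of_subset (monotone_spanningSets ν hmk)
        (fun _ => zero_le) b
  have hsup : ∀ a b, (⨆ m, Gm m a b) = G a b := by
    intro a b
    refine le_antisymm (iSup_le fun m => hle m a b) ?_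
    obtain ⟨i, hi⟩ : ∃ i, a ∈ A i := by
      have := iUnion_spanningSets μ
      rw [← hA] at this
      simpa using (this ▸ Set.mem_univ a : a ∈ ⋃ i, A i)
    obtain ⟨j, hj⟩ : ∃ j, b ∈ B j := by
      have := iUnion_spanningSets ν
      rw [← hB] at this
      simpa using (this ▸ Set.mem_univ b : b ∈ ⋃ j, B j)
    have key : ∀ m, min (G a b) ((max i j + m : ℕ) : ℝ≥0∞) ≤ ⨆ k, Gm k a b := by
      intro m
      have ha' : a ∈ A (max i j + m) :=
        monotone_spanningSets μ (le_trans (le_max_left i j) (Nat.le_add_right _ m)) hi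
      have hb' : b ∈ B (max i j + m) :=
        monotone_spanningSets ν (le_trans (le_max_right i j) (Nat.le_add_right _ m)) hj
      have : Gm (max i j + m) a b = min (G a b) ((max i j + m : ℕ) : ℝ≥0∞) := by
        rw [hGm]
        simp [Set.indicator_of_mem, ha', hb']
      exact this ▸ le_iSup (fun k => Gm k a b) (max i j + m)
    rcases eq_or_ne (G a b) ∞ with hx | hx
    · rw [hx] at key ⊢
      calc (⊤:ℝ≥0∞) = ⨆ m : ℕ, (m:ℝ≥0∞) := ENNReal.iSup_natCast.symm
        _ ≤ ⨆ m : ℕ, ((max i j + m : ℕ) : ℝ≥0∞) := by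
            refine iSup_mono fun m => ?_
            exact_mod_cast Nat.le_add_left m _
        _ ≤ ⨆ k, Gm k a b := iSup_le fun m =>
            le_trans (le_min le_top le_rfl) (key m)
    · obtain ⟨m, hm⟩ := ENNReal.exists_nat_gt hx
      refine le_trans ?_ (key m)
      simp only [le_min_iff, le_refl, true_and]
      calc G a b ≤ (m : ℝ≥0∞) := hm.le
        _ ≤ _ := by exact_mod_cast Nat.le_add_left m _
  -- finiteness of truncated K
  have hKm : ∀ m, (∫⁻ b, (∫⁻ a, Gm m a b ∂μ) ^ r ∂ν) ≠ ∞ := by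
    intro m
    set C : ℝ≥0∞ := ((m : ℝ≥0∞) * μ (A m)) ^ r with hC
    have hbound : ∀ b, (∫⁻ a, Gm m a b ∂μ) ^ r ≤ (B m).indicator (fun _ => C) b := by
      intro b
      by_cases hb : b ∈ B m
      · rw [Set.indicator_of_mem hb]
        refine ENNReal.rpow_le_rpow ?_ hr0.le
        calc ∫⁻ a, Gm m a b ∂μ ≤ ∫⁻ a, (A m).indicator (fun _ => (m : ℝ≥0∞)) a ∂μ := by
              refine lintegral_mono fun a => ?_
              by_cases ha : a ∈ A m
              · simp only [hGm, Set.indicator_of_mem ha, Pi.one_apply, mul_one]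
                calc (G a b ⊓ (m:ℝ≥0∞)) * (B m).indicator 1 b
                    ≤ (m:ℝ≥0∞) * 1 := mul_le_mul' (min_le_right _ _)
                      (Set.indicator_le_self' (fun _ _ => zero_le_one) b)
                  _ = (m:ℝ≥0∞) := mul_one _
              · simp [hGm, Set.indicator_of_notMem ha]
          _ = (m : ℝ≥0∞) * μ (A m) := lintegral_indicator_const (measurableSet_spanningSets μ m) _
      · rw [Set.indicator_of_notMem hb]
        have : ∀ a, Gm m a b = 0 := by
          intro a
          simp [hGm, Set.indicator_of_notMem hb]
        simp only [this, lintegral_zero]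
        rw [ENNReal.zero_rpow_of_pos hr0]
    have : (∫⁻ b, (∫⁻ a, Gm m a b ∂μ) ^ r ∂ν) ≤ C * ν (B m) := by
      refine le_trans (lintegral_mono hbound) ?_
      rw [lintegral_indicator_const (measurableSet_spanningSets ν m)]
    refine (lt_of_le_of_lt this ?_).ne
    refine ENNReal.mul_lt_top ?_ (measure_spanningSets_lt_top ν m)
    refine ENNReal.rpow_lt_top_of_nonneg hr0.le ?_
    exact (ENNReal.mul_lt_top (by simp) (measure_spanningSets_lt_top μ m)).ne
  -- monotone convergence on the left
  have hMeasGmb : ∀ m, Measurable fun b => ∫⁻ a, Gm m a b ∂μ := fun m =>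
    Measurable.lintegral_prod_left' (f := fun p : α × β => Gm m p.1 p.2) (hGmMeas m)
  have hinner : ∀ b, (∫⁻ a, G a b ∂μ) ^ r = ⨆ m, (∫⁻ a, Gm m a b ∂μ) ^ r := by
    intro b
    rw [← ennreal_iSup_rpow _ hr0]
    congr 1
    calc ∫⁻ a, G a b ∂μ = ∫⁻ a, ⨆ m, Gm m a b ∂μ := by
          refine lintegral_congr fun a => (hsup a b).symm
      _ = ⨆ m, ∫⁻ a, Gm m a b ∂μ :=
          lintegral_iSup (fun m => (hGmMeas m).comp (measurable_id.prodMk measurable_const))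
            (fun m k hmk a => hmono a b hmk)
  have houter : (∫⁻ b, (∫⁻ a, G a b ∂μ) ^ r ∂ν)
      = ⨆ m, ∫⁻ b, (∫⁻ a, Gm m a b ∂μ) ^ r ∂ν := by
    simp_rw [hinner]
    exact lintegral_iSup (fun m => (hMeasGmb m).pow measurable_const)
      (fun m k hmk b => ENNReal.rpow_le_rpow
        (lintegral_mono fun a => hmono a b hmk) hr0.le)
  rw [houter, ennreal_iSup_rpow _ (by positivity)]
  refine iSup_le fun m => ?_
  refine le_trans (minkowski_aux hr1 (hGmMeas m) (hKm m)) ?_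
  refine lintegral_mono fun a => ENNReal.rpow_le_rpow
    (lintegral_mono fun b => ENNReal.rpow_le_rpow (hle m a b) hr0.le) (by positivity)

end mink

section swap
variable {α β : Type*} [MeasurableSpace α] [MeasurableSpace β]
  {μ : Measure α} {ν : Measure β}

theorem ae_null_slice [SFinite μ] [SFinite ν] {S : Set (α × β)}
    (hS : MeasurableSet S) (h : μ.prod ν S = 0) :
    ∀ᵐ b ∂ν, μ {a | (a, b) ∈ S} = 0 := by
  have h2 : ν.prod μ (Prod.swap ⁻¹' S) = 0 := by
    rw [← Measure.prod_swap, Measure.map_apply measurable_swap hS] at h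
    exact h
  have h3 := Measure.measure_ae_null_of_prod_null h2
  filter_upwards [h3] with b hb
  exact hb

theorem ae_slice_le [SFinite μ] [SFinite ν] {F : α → β → ℝ≥0∞}
    (hF : Measurable (Function.uncurry F)) {H : α → ℝ≥0∞} (mH : Measurable H)
    (hH : ∀ a, ∀ᵐ b ∂ν, F a b ≤ H a) :
    ∀ᵐ b ∂ν, ∀ᵐ a ∂μ, F a b ≤ H a := by
  have hS : MeasurableSet {p : α × β | H p.1 < F p.1 p.2} :=
    measurableSet_lt (mH.comp measurable_fst) hF
  have hnull : μ.prod ν {p : α × β | H p.1 < F p.1 p.2} = 0 := by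
    rw [Measure.measure_prod_null hS]
    refine Filter.Eventually.of_forall fun a => ?_
    have h1 := ae_iff.mp (hH a)
    simp only [not_le] at h1
    exact h1
  have hslice := ae_null_slice hS hnull
  filter_upwards [hslice] with b hb
  rw [ae_iff]
  simpa only [not_le] using hb

theorem lnorm_swap_le [SigmaFinite μ] [SigmaFinite ν] {q q' : ℝ≥0∞}
    (hq0 : 0 < q) (hqq' : q ≤ q')
    {F : α → β → ℝ≥0∞} (hF : Measurable (Function.uncurry F)) :
    lnorm ν q' (fun b => lnorm μ q fun a => F a b) ≤
      lnorm μ q fun a => lnorm ν q' (F a) := by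
  rcases eq_or_ne q' ∞ with hq' | hq'
  · subst hq'
    have mH : Measurable fun a => essSup (F a) ν := measurable_essSup_param hF
    have hslice : ∀ᵐ b ∂ν, ∀ᵐ a ∂μ, F a b ≤ essSup (F a) ν :=
      ae_slice_le hF mH fun a => ae_le_essSup (f := F a)
    rcases eq_or_ne q ∞ with hq | hq
    · subst hq
      simp only [lnorm, if_pos rfl]
      refine essSup_le_of_ae_le _ ?_
      filter_upwards [hslice] with b hb
      exact essSup_mono_ae hb
    · have hs : 0 < q.toReal := ENNReal.toReal_pos hq0.ne' hq
      simp only [lnorm, if_pos rfl, if_neg hq]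
      refine essSup_le_of_ae_le _ ?_
      filter_upwards [hslice] with b hb
      refine ENNReal.rpow_le_rpow ?_ (by positivity)
      refine lintegral_mono_ae ?_
      filter_upwards [hb] with a ha
      exact ENNReal.rpow_le_rpow ha hs.le
  · -- q ≤ q' < ∞ : Minkowski
    have hq : q ≠ ∞ := (lt_of_le_of_lt hqq' (lt_top_iff_ne_top.mpr hq')).ne
    have hs : 0 < q.toReal := ENNReal.toReal_pos hq0.ne' hq
    have ht : 0 < q'.toReal := ENNReal.toReal_pos (lt_of_lt_of_le hq0 hqq').ne' hq'
    have hst : q.toReal ≤ q'.toReal := ENNReal.toReal_mono hq' hqq'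
    set s := q.toReal
    set t := q'.toReal
    set r : ℝ := t / s with hrdef
    have hr1 : 1 ≤ r := (one_le_div hs).mpr hst
    have hsr : s * r = t := by rw [hrdef]; field_simp
    have hG : Measurable (Function.uncurry fun a b => F a b ^ s) :=
      hF.pow measurable_const
    have hmink := minkowski (μ := μ) (ν := ν) (G := fun a b => F a b ^ s) hr1 hG
    simp only [lnorm, if_neg hq, if_neg hq']
    have e1 : (∫⁻ b, ((∫⁻ a, F a b ^ s ∂μ) ^ (1/s)) ^ t ∂ν)
        = ∫⁻ b, (∫⁻ a, F a b ^ s ∂μ) ^ r ∂ν := by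
      refine lintegral_congr fun b => ?_
      rw [← ENNReal.rpow_mul]
      congr 1
      rw [hrdef]; ring
    have e2 : ∀ a, ((∫⁻ b, F a b ^ t ∂ν) ^ (1/t)) ^ s
        = (∫⁻ b, (F a b ^ s) ^ r ∂ν) ^ (1/r) := by
      intro a
      rw [← ENNReal.rpow_mul]
      have e21 : (∫⁻ b, (F a b ^ s) ^ r ∂ν) = ∫⁻ b, F a b ^ t ∂ν := by
        refine lintegral_congr fun b => ?_
        rw [← ENNReal.rpow_mul, hsr]
      rw [e21]
      congr 1
      rw [hrdef]
      field_simp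
    calc (∫⁻ b, ((∫⁻ a, F a b ^ s ∂μ) ^ (1/s)) ^ t ∂ν) ^ (1/t)
        = ((∫⁻ b, (∫⁻ a, F a b ^ s ∂μ) ^ r ∂ν) ^ (1/r)) ^ (1/s) := by
          rw [e1, ← ENNReal.rpow_mul]
          congr 1
          rw [hrdef]
          field_simp
      _ ≤ (∫⁻ a, (∫⁻ b, (F a b ^ s) ^ r ∂ν) ^ (1/r) ∂μ) ^ (1/s) :=
          ENNReal.rpow_le_rpow hmink (by positivity)
      _ = (∫⁻ a, ((∫⁻ b, F a b ^ t ∂ν) ^ (1/t)) ^ s ∂μ) ^ (1/s) := by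
          rw [lintegral_congr fun a => (e2 a).symm]

end swap

section lists
variable {n : ℕ} {X : Fin n → Type*} [∀ j, MeasurableSpace (X j)]
  (μ : ∀ j, Measure (X j)) [∀ j, SigmaFinite (μ j)]

theorem normIn_eq_lnorm (j : Fin n) (q : ℝ≥0∞) (f : (∀ k, X k) → ℝ≥0∞)
    (x : ∀ k, X k) :
    normIn μ j q f x = lnorm (μ j) q (fun t => f (Function.update x j t)) := rfl

theorem normIn_mono {j : Fin n} {q : ℝ≥0∞} {f g : (∀ k, X k) → ℝ≥0∞}
    (h : ∀ y, f y ≤ g y) (x : ∀ k, X k) : normIn μ j q f x ≤ normIn μ j q g x := by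
  rw [normIn_eq_lnorm, normIn_eq_lnorm]
  exact lnorm_mono fun t => h _

theorem normIn_measurable {j : Fin n} {q : ℝ≥0∞} {f : (∀ k, X k) → ℝ≥0∞}
    (hf : Measurable f) : Measurable (normIn μ j q f) := by
  have : Measurable fun x => lnorm (μ j) q (fun t => f (Function.update x j t)) :=
    measurable_lnorm_param (g := fun x t => f (Function.update x j t))
      (hf.comp measurable_update') q
  exact this

theorem normIn_swap {j j' : Fin n} (hjj' : j ≠ j') {q q' : ℝ≥0∞}
    (hq0 : 0 < q) (hqq' : q ≤ q') {f : (∀ k, X k) → ℝ≥0∞} (hf : Measurable f)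
    (x : ∀ k, X k) :
    normIn μ j' q' (normIn μ j q f) x ≤ normIn μ j q (normIn μ j' q' f) x := by
  classical
  set F : X j → X j' → ℝ≥0∞ :=
    fun a b => f (Function.update (Function.update x j a) j' b) with hFdef
  have hFm : Measurable (Function.uncurry F) := by
    refine hf.comp ?_
    exact measurable_update'.comp
      (((measurable_update x (a := j)).comp measurable_fst).prodMk measurable_snd)
  have key := lnorm_swap_le (μ := μ j) (ν := μ j') hq0 hqq' hFm
  have eL : normIn μ j' q' (normIn μ j q f) x
      = lnorm (μ j') q' (fun b => lnorm (μ j) q fun a => F a b) := by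
    rw [normIn_eq_lnorm]
    congr 1
    funext b
    rw [normIn_eq_lnorm]
    congr 1
    funext a
    rw [hFdef]
    exact congrArg f (Function.update_comm hjj'.symm _ _ _)
  have eR : normIn μ j q (normIn μ j' q' f) x
      = lnorm (μ j) q fun a => lnorm (μ j') q' (F a) := rfl
  rw [eL, eR]
  exact key

/-- abbreviation for the iterated norm -/
noncomputable def normList (P : List (Fin n × ℝ≥0∞)) (f : (∀ k, X k) → ℝ≥0∞) :
    (∀ k, X k) → ℝ≥0∞ :=
  P.foldl (fun g jq => normIn μ jq.1 jq.2 g) f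

theorem normList_cons (e : Fin n × ℝ≥0∞) (P : List (Fin n × ℝ≥0∞))
    (f : (∀ k, X k) → ℝ≥0∞) :
    normList μ (e :: P) f = normList μ P (normIn μ e.1 e.2 f) := rfl

theorem normList_mono (P : List (Fin n × ℝ≥0∞)) {f g : (∀ k, X k) → ℝ≥0∞}
    (h : ∀ y, f y ≤ g y) : ∀ x, normList μ P f x ≤ normList μ P g x := by
  induction P generalizing f g with
  | nil => exact h
  | cons e t ih =>
    rw [normList_cons, normList_cons]
    exact ih fun y => normIn_mono μ h y

theorem normList_measurable (P : List (Fin n × ℝ≥0∞)) {f : (∀ k, X k) → ℝ≥0∞}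
    (hf : Measurable f) : Measurable (normList μ P f) := by
  induction P generalizing f with
  | nil => exact hf
  | cons e t ih => exact ih (normIn_measurable μ hf)

theorem normList_swap_head {j j' : Fin n} (hjj' : j ≠ j') {q q' : ℝ≥0∞}
    (hq0 : 0 < q) (hqq' : q ≤ q') (P : List (Fin n × ℝ≥0∞))
    {f : (∀ k, X k) → ℝ≥0∞} (hf : Measurable f) (x : ∀ k, X k) :
    normList μ ((j, q) :: (j', q') :: P) f x ≤
      normList μ ((j', q') :: (j, q) :: P) f x := by
  rw [normList_cons, normList_cons, normList_cons, normList_cons]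
  exact normList_mono μ P (fun y => normIn_swap μ hjj' hq0 hqq' hf y) x

end lists

section sort
variable {n : ℕ} {X : Fin n → Type*} [∀ j, MeasurableSpace (X j)]
  (μ : ∀ j, Measure (X j)) [∀ j, SigmaFinite (μ j)]

/-- moving a maximal-exponent entry to the front (innermost) increases the norm -/
theorem normList_max_front (l₁ l₂ : List (Fin n × ℝ≥0∞)) (e : Fin n × ℝ≥0∞)
    (hmax : ∀ e' ∈ l₁, e'.2 ≤ e.2) (hne : ∀ e' ∈ l₁, e'.1 ≠ e.1)
    (hpos : ∀ e' ∈ l₁, 0 < e'.2)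
    {f : (∀ k, X k) → ℝ≥0∞} (hf : Measurable f) (x : ∀ k, X k) :
    normList μ (l₁ ++ e :: l₂) f x ≤ normList μ (e :: (l₁ ++ l₂)) f x := by
  induction l₁ generalizing f x with
  | nil => exact le_rfl
  | cons a t ih =>
    calc normList μ ((a :: t) ++ e :: l₂) f x
        = normList μ (t ++ e :: l₂) (normIn μ a.1 a.2 f) x := rfl
      _ ≤ normList μ (e :: (t ++ l₂)) (normIn μ a.1 a.2 f) x :=
          ih (fun e' h => hmax e' (List.mem_cons_of_mem a h))
            (fun e' h => hne e' (List.mem_cons_of_mem a h))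
            (fun e' h => hpos e' (List.mem_cons_of_mem a h))
            (normIn_measurable μ hf) x
      _ = normList μ (a :: e :: (t ++ l₂)) f x := rfl
      _ ≤ normList μ (e :: a :: (t ++ l₂)) f x :=
          normList_swap_head μ (hne a (List.mem_cons_self))
            (hpos a (List.mem_cons_self)) (hmax a (List.mem_cons_self))
            (t ++ l₂) hf x
      _ = normList μ (e :: ((a :: t) ++ l₂)) f x := rfl

/-- moving a minimal-exponent entry to the front (innermost) decreases the norm -/
theorem normList_min_front (l₁ l₂ : List (Fin n × ℝ≥0∞)) (e : Fin n × ℝ≥0∞)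
    (hmin : ∀ e' ∈ l₁, e.2 ≤ e'.2) (hne : ∀ e' ∈ l₁, e.1 ≠ e'.1)
    (hpose : 0 < e.2)
    {f : (∀ k, X k) → ℝ≥0∞} (hf : Measurable f) (x : ∀ k, X k) :
    normList μ (e :: (l₁ ++ l₂)) f x ≤ normList μ (l₁ ++ e :: l₂) f x := by
  induction l₁ generalizing f x with
  | nil => exact le_rfl
  | cons a t ih =>
    calc normList μ (e :: ((a :: t) ++ l₂)) f x
        = normList μ (e :: a :: (t ++ l₂)) f x := rfl
      _ ≤ normList μ (a :: e :: (t ++ l₂)) f x :=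
          normList_swap_head μ (hne a (List.mem_cons_self)) hpose
            (hmin a (List.mem_cons_self)) (t ++ l₂) hf x
      _ = normList μ (e :: (t ++ l₂)) (normIn μ a.1 a.2 f) x := rfl
      _ ≤ normList μ (t ++ e :: l₂) (normIn μ a.1 a.2 f) x :=
          ih (fun e' h => hmin e' (List.mem_cons_of_mem a h))
            (fun e' h => hne e' (List.mem_cons_of_mem a h))
            (normIn_measurable μ hf) x
      _ = normList μ ((a :: t) ++ e :: l₂) f x := rfl

/-- rearranging into decreasing order increases the norm -/
theorem normList_le_sorted_desc (l l' : List (Fin n × ℝ≥0∞)) (hperm : l'.Perm l)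
    (hsort : l'.Pairwise fun e e' => e'.2 ≤ e.2)
    (hnodup : (l.map Prod.fst).Nodup) (hpos : ∀ e' ∈ l, 0 < e'.2)
    {f : (∀ k, X k) → ℝ≥0∞} (hf : Measurable f) (x : ∀ k, X k) :
    normList μ l f x ≤ normList μ l' f x := by
  induction l' generalizing l f x with
  | nil =>
    rw [List.nil_perm.mp hperm]
  | cons b t ih =>
    have hbl : b ∈ l := hperm.subset (List.mem_cons_self)
    obtain ⟨l₁, l₂, rfl⟩ := List.append_of_mem hbl
    have hmax : ∀ e' ∈ l₁ ++ b :: l₂, e'.2 ≤ b.2 := by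
      intro e' he'
      rcases List.mem_cons.mp (hperm.symm.subset he') with h | h
      · rw [h]
      · exact (List.pairwise_cons.mp hsort).1 e' h
    have hnodup' : (l₁.map Prod.fst).Nodup ∧ ((b :: l₂).map Prod.fst).Nodup ∧
        (l₁.map Prod.fst).Disjoint ((b :: l₂).map Prod.fst) := by
      rw [List.map_append] at hnodup
      exact List.nodup_append'.mp hnodup
    have hne : ∀ e' ∈ l₁, e'.1 ≠ b.1 := fun e' h hfst =>
      hnodup'.2.2 (List.mem_map_of_mem (f := Prod.fst) h)
        (hfst ▸ List.mem_cons_self)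
    have hpos₁ : ∀ e' ∈ l₁, 0 < e'.2 := fun e' h =>
      hpos e' (List.mem_append_left _ h)
    have hperm' : t.Perm (l₁ ++ l₂) :=
      (List.perm_cons b).mp (hperm.trans List.perm_middle)
    have hnodup'' : ((l₁ ++ l₂).map Prod.fst).Nodup := by
      rw [List.map_append]
      refine List.Nodup.sublist ?_ (by rw [List.map_append] at hnodup; exact hnodup)
      exact List.Sublist.append (List.Sublist.refl _) (List.sublist_cons_self _ _)
    have hpos'' : ∀ e' ∈ l₁ ++ l₂, 0 < e'.2 := by
      intro e' h
      rcases List.mem_append.mp h with h | h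
      · exact hpos e' (List.mem_append_left _ h)
      · exact hpos e' (List.mem_append_right _ (List.mem_cons_of_mem b h))
    calc normList μ (l₁ ++ b :: l₂) f x
        ≤ normList μ (b :: (l₁ ++ l₂)) f x :=
          normList_max_front μ l₁ l₂ b (fun e' h => hmax e' (List.mem_append_left _ h))
            hne hpos₁ hf x
      _ = normList μ (l₁ ++ l₂) (normIn μ b.1 b.2 f) x := rfl
      _ ≤ normList μ t (normIn μ b.1 b.2 f) x :=
          ih (l₁ ++ l₂) hperm' (List.pairwise_cons.mp hsort).2 hnodup'' hpos''
            (normIn_measurable μ hf) x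
      _ = normList μ (b :: t) f x := rfl

/-- rearranging into increasing order decreases the norm -/
theorem normList_sorted_asc_le (l l' : List (Fin n × ℝ≥0∞)) (hperm : l'.Perm l)
    (hsort : l'.Pairwise fun e e' => e.2 ≤ e'.2)
    (hnodup : (l.map Prod.fst).Nodup) (hpos : ∀ e' ∈ l, 0 < e'.2)
    {f : (∀ k, X k) → ℝ≥0∞} (hf : Measurable f) (x : ∀ k, X k) :
    normList μ l' f x ≤ normList μ l f x := by
  induction l' generalizing l f x with
  | nil =>
    rw [List.nil_perm.mp hperm]
  | cons b t ih =>
    have hbl : b ∈ l := hperm.subset (List.mem_cons_self)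
    obtain ⟨l₁, l₂, rfl⟩ := List.append_of_mem hbl
    have hmin : ∀ e' ∈ l₁ ++ b :: l₂, b.2 ≤ e'.2 := by
      intro e' he'
      rcases List.mem_cons.mp (hperm.symm.subset he') with h | h
      · rw [h]
      · exact (List.pairwise_cons.mp hsort).1 e' h
    have hnodup' : (l₁.map Prod.fst).Nodup ∧ ((b :: l₂).map Prod.fst).Nodup ∧
        (l₁.map Prod.fst).Disjoint ((b :: l₂).map Prod.fst) := by
      rw [List.map_append] at hnodup
      exact List.nodup_append'.mp hnodup
    have hne : ∀ e' ∈ l₁, b.1 ≠ e'.1 := fun e' h hfst =>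
      hnodup'.2.2 (List.mem_map_of_mem (f := Prod.fst) h)
        (hfst ▸ List.mem_cons_self)
    have hperm' : t.Perm (l₁ ++ l₂) :=
      (List.perm_cons b).mp (hperm.trans List.perm_middle)
    have hnodup'' : ((l₁ ++ l₂).map Prod.fst).Nodup := by
      rw [List.map_append]
      refine List.Nodup.sublist ?_ (by rw [List.map_append] at hnodup; exact hnodup)
      exact List.Sublist.append (List.Sublist.refl _) (List.sublist_cons_self _ _)
    have hpos'' : ∀ e' ∈ l₁ ++ l₂, 0 < e'.2 := by
      intro e' h
      rcases List.mem_append.mp h with h | h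
      · exact hpos e' (List.mem_append_left _ h)
      · exact hpos e' (List.mem_append_right _ (List.mem_cons_of_mem b h))
    calc normList μ (b :: t) f x
        = normList μ t (normIn μ b.1 b.2 f) x := rfl
      _ ≤ normList μ (l₁ ++ l₂) (normIn μ b.1 b.2 f) x :=
          ih (l₁ ++ l₂) hperm' (List.pairwise_cons.mp hsort).2 hnodup'' hpos''
            (normIn_measurable μ hf) x
      _ = normList μ (b :: (l₁ ++ l₂)) f x := rfl
      _ ≤ normList μ (l₁ ++ b :: l₂) f x :=
          normList_min_front μ l₁ l₂ b (fun e' h => hmin e' (List.mem_append_left _ h))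
            hne (hpos b hbl) hf x

end sort


/-- Fournier's fully-sorted Minkowski inequality: if `σ` sorts the exponents into
decreasing order and `ρ` sorts them into increasing order, then
`‖f‖_{P·ρ} ≤ ‖f‖_P ≤ ‖f‖_{P·σ}` for every nonnegative measurable `f`. -/
theorem mixedNorm_fully_sorted {n : ℕ} {X : Fin n → Type*}
    [∀ j, MeasurableSpace (X j)] (μ : ∀ j, Measure (X j)) [∀ j, SigmaFinite (μ j)]
    (p : Fin n → ℝ≥0∞) (hp : ∀ j, 0 < p j)
    (σ ρ : Equiv.Perm (Fin n))
    (hσ : ∀ i j : Fin n, i ≤ j → p (σ j) ≤ p (σ i))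
    (hρ : ∀ i j : Fin n, i ≤ j → p (ρ i) ≤ p (ρ j))
    (f : (∀ k, X k) → ℝ≥0∞) (hf : Measurable f) :
    mixedNorm μ (List.ofFn fun k => (ρ k, p (ρ k))) f ≤
        mixedNorm μ (List.ofFn fun k => (k, p k)) f ∧
      mixedNorm μ (List.ofFn fun k => (k, p k)) f ≤
        mixedNorm μ (List.ofFn fun k => (σ k, p (σ k))) f := by
  have hLσperm : (List.ofFn fun k => (σ k, p (σ k))).Perm (List.ofFn fun k => (k, p k)) :=
    Equiv.Perm.ofFn_comp_perm σ fun k => (k, p k)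
  have hLρperm : (List.ofFn fun k => (ρ k, p (ρ k))).Perm (List.ofFn fun k => (k, p k)) :=
    Equiv.Perm.ofFn_comp_perm ρ fun k => (k, p k)
  have hnodup : ((List.ofFn fun k : Fin n => (k, p k)).map Prod.fst).Nodup := by
    rw [List.map_ofFn]
    exact List.nodup_ofFn.mpr fun i j h => h
  have hpos : ∀ e ∈ (List.ofFn fun k : Fin n => (k, p k)), 0 < e.2 := by
    intro e he
    obtain ⟨k, hk⟩ := List.mem_ofFn.mp he
    rw [← hk]
    exact hp k
  have hsortσ : (List.ofFn fun k => (σ k, p (σ k))).Pairwise fun e e' => e'.2 ≤ e.2 :=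
    List.pairwise_ofFn.mpr fun i j h => hσ i j h.le
  have hsortρ : (List.ofFn fun k => (ρ k, p (ρ k))).Pairwise fun e e' => e.2 ≤ e'.2 :=
    List.pairwise_ofFn.mpr fun i j h => hρ i j h.le
  constructor
  · exact iSup_mono fun x =>
      normList_sorted_asc_le μ _ _ hLρperm hsortρ hnodup hpos hf x
  · exact iSup_mono fun x =>
      normList_le_sorted_desc μ _ _ hLσperm hsortσ hnodup hpos hf x
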